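/- Let λ > 0, T > 0, and for (x,t) with |x| ≤ 1 let φ(x,t) = e^{λ(|x-ϑ|² - (1/4)(t - x·ω)²)} with |ϑ| = 2 and ω a unit vector. Define κ(σ) = sup_{|x| ≤ 1} ∫_{-T}^{T} e^{2σ(φ(x,t) - φ(x, x·ω))} dt. Then κ(σ) → 0 as σ → ∞. -/

import Mathlib

open scoped RealInnerProductSpace
open MeasureTheory Filter

theorem stmt_4 {n : ℕ} (lam T : ℝ) (hlam : 0 < lam) (hT : 0 < T)
    (ϑ ω : EuclideanSpace ℝ (Fin n)) (hϑ : ‖ϑ‖ = 2) (hω : ‖ω‖ = 1)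
    (φ : EuclideanSpace ℝ (Fin n) → ℝ → ℝ)
    (hφ : ∀ x t, φ x t = Real.exp (lam * (‖x - ϑ‖ ^ 2 - (1 / 4) * (t - ⟪x, ω⟫) ^ 2))) :
    Tendsto
      (fun σ : ℝ => ⨆ x : Metric.closedBall (0 : EuclideanSpace ℝ (Fin n)) 1,
        ∫ t in (-T)..T, Real.exp (2 * σ * (φ x t - φ x ⟪(x : EuclideanSpace ℝ (Fin n)), ω⟫)))
      atTop (nhds 0) := by
  haveI : Nonempty (Metric.closedBall (0 : EuclideanSpace ℝ (Fin n)) 1) :=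
    ⟨⟨0, Metric.mem_closedBall_self zero_le_one⟩⟩
  have hTle : (-T : ℝ) ≤ T := by linarith
  have hg0 : Tendsto (fun σ : ℝ => 2 * T * Real.exp (-σ) + Real.sqrt (Real.pi / (σ * lam / 4)))
      atTop (nhds 0) := by
    have h1 : Tendsto (fun σ : ℝ => 2 * T * Real.exp (-σ)) atTop (nhds 0) := by
      simpa using (Real.tendsto_exp_neg_atTop_nhds_zero).const_mul (2 * T)
    have h3 : Tendsto (fun σ : ℝ => Real.pi / (σ * lam / 4)) atTop (nhds 0) := by
      apply Tendsto.div_atTop tendsto_const_nhds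
      exact Tendsto.atTop_div_const (by norm_num) (tendsto_id.atTop_mul_const hlam)
    have h2 : Tendsto (fun σ : ℝ => Real.sqrt (Real.pi / (σ * lam / 4))) atTop (nhds 0) := by
      have := (Real.continuous_sqrt.tendsto 0).comp h3
      simpa [Function.comp_def] using this
    simpa using h1.add h2
  apply tendsto_of_tendsto_of_tendsto_of_le_of_le' tendsto_const_nhds hg0
  · filter_upwards with σ
    exact Real.iSup_nonneg fun x =>
      intervalIntegral.integral_nonneg hTle fun t _ => (Real.exp_pos _).le
  · filter_upwards [eventually_gt_atTop 0] with σ hσ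
    apply ciSup_le
    intro x
    set a : ℝ := ⟪(x : EuclideanSpace ℝ (Fin n)), ω⟫ with ha
    have hc : 0 < σ * lam / 4 := by positivity
    have hE : 1 ≤ Real.exp (lam * ‖(x : EuclideanSpace ℝ (Fin n)) - ϑ‖ ^ 2) :=
      Real.one_le_exp (by positivity)
    have key : ∀ t : ℝ, Real.exp (2 * σ * (φ x t - φ x a)) ≤
        Real.exp (-σ) + Real.exp (-(σ * lam / 4) * (t - a) ^ 2) := by
      intro t
      set u : ℝ := lam / 4 * (t - a) ^ 2 with hu
      have hu0 : 0 ≤ u := by positivity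
      have hdiff : φ x t - φ x a ≤ Real.exp (-u) - 1 := by
        have h1 : φ x t
            = Real.exp (lam * ‖(x : EuclideanSpace ℝ (Fin n)) - ϑ‖ ^ 2) * Real.exp (-u) := by
          rw [hφ, ← Real.exp_add]; congr 1; rw [hu]; ring
        have h2 : φ x a = Real.exp (lam * ‖(x : EuclideanSpace ℝ (Fin n)) - ϑ‖ ^ 2) := by
          rw [hφ]; congr 1; ring
        have he1 : Real.exp (-u) ≤ 1 := Real.exp_le_one_iff.mpr (neg_nonpos.2 hu0)
        rw [h1, h2]
        nlinarith [mul_nonneg (sub_nonneg.2 hE) (sub_nonneg.2 he1)]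
      rcases le_or_gt u 1 with h | h
      · have hbd : Real.exp (-u) ≤ 1 - u / 2 := by
          have h1 := Real.add_one_le_exp u
          have h2 : Real.exp (-u) * Real.exp u = 1 := by
            rw [← Real.exp_add]; simp
          nlinarith [Real.exp_pos u, Real.exp_pos (-u), mul_nonneg hu0 (sub_nonneg.2 h)]
        have hle : 2 * σ * (φ x t - φ x a) ≤ -(σ * lam / 4) * (t - a) ^ 2 := by
          have hd : φ x t - φ x a ≤ -(u / 2) := by linarith
          calc 2 * σ * (φ x t - φ x a) ≤ 2 * σ * (-(u / 2)) :=
                mul_le_mul_of_nonneg_left hd (by linarith)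
            _ = -(σ * lam / 4) * (t - a) ^ 2 := by rw [hu]; ring
        calc Real.exp (2 * σ * (φ x t - φ x a))
            ≤ Real.exp (-(σ * lam / 4) * (t - a) ^ 2) := Real.exp_le_exp.2 hle
          _ ≤ _ := le_add_of_nonneg_left (Real.exp_pos _).le
      · have he : Real.exp (-u) ≤ 1 / 2 := by
          have h2le : (2 : ℝ) ≤ Real.exp 1 := by
            have := Real.add_one_le_exp (1 : ℝ); linarith
          have hmono : Real.exp (-u) ≤ Real.exp (-1) := Real.exp_le_exp.2 (by linarith)
          have h3 : Real.exp (-1 : ℝ) * Real.exp 1 = 1 := by rw [← Real.exp_add]; simp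
          nlinarith [Real.exp_pos (1 : ℝ), Real.exp_pos (-1 : ℝ)]
        have hle : 2 * σ * (φ x t - φ x a) ≤ -σ := by
          have hd : φ x t - φ x a ≤ -(1 / 2) := by linarith
          calc 2 * σ * (φ x t - φ x a) ≤ 2 * σ * (-(1 / 2)) :=
                mul_le_mul_of_nonneg_left hd (by linarith)
            _ = -σ := by ring
        calc Real.exp (2 * σ * (φ x t - φ x a))
            ≤ Real.exp (-σ) := Real.exp_le_exp.2 hle
          _ ≤ _ := le_add_of_nonneg_right (Real.exp_pos _).le
    have hφc : Continuous (φ (x : EuclideanSpace ℝ (Fin n))) := by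
      have : φ (x : EuclideanSpace ℝ (Fin n))
          = fun t => Real.exp (lam * (‖(x : EuclideanSpace ℝ (Fin n)) - ϑ‖ ^ 2
            - (1 / 4) * (t - a) ^ 2)) := funext (hφ x)
      rw [this]; fun_prop
    have hcont : Continuous fun t => Real.exp (2 * σ * (φ x t - φ x a)) :=
      Real.continuous_exp.comp (continuous_const.mul (hφc.sub continuous_const))
    have hInt1 : IntervalIntegrable (fun t => Real.exp (2 * σ * (φ x t - φ x a)))
        volume (-T) T := hcont.intervalIntegrable _ _
    have hInt2 : IntervalIntegrable
        (fun t : ℝ => Real.exp (-(σ * lam / 4) * (t - a) ^ 2)) volume (-T) T := by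
      apply Continuous.intervalIntegrable; fun_prop
    have hmono := intervalIntegral.integral_mono_on hTle hInt1
      ((intervalIntegrable_const).add hInt2) (fun t _ => key t)
    have hgauss_int : Integrable (fun t : ℝ => Real.exp (-(σ * lam / 4) * (t - a) ^ 2)) :=
      (integrable_exp_neg_mul_sq hc).comp_sub_right a
    have hgauss : (∫ t in (-T)..T, Real.exp (-(σ * lam / 4) * (t - a) ^ 2))
        ≤ Real.sqrt (Real.pi / (σ * lam / 4)) := by
      rw [intervalIntegral.integral_of_le hTle]
      calc (∫ t in Set.Ioc (-T) T, Real.exp (-(σ * lam / 4) * (t - a) ^ 2))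
          ≤ ∫ t : ℝ, Real.exp (-(σ * lam / 4) * (t - a) ^ 2) :=
            setIntegral_le_integral hgauss_int
              (Filter.Eventually.of_forall fun t => (Real.exp_pos _).le)
        _ = ∫ t : ℝ, Real.exp (-(σ * lam / 4) * t ^ 2) :=
            integral_sub_right_eq_self (fun t => Real.exp (-(σ * lam / 4) * t ^ 2)) a
        _ = Real.sqrt (Real.pi / (σ * lam / 4)) := integral_gaussian _
    have hsplit : (∫ t in (-T)..T,
          (Real.exp (-σ) + Real.exp (-(σ * lam / 4) * (t - a) ^ 2)))
        = 2 * T * Real.exp (-σ) + ∫ t in (-T)..T, Real.exp (-(σ * lam / 4) * (t - a) ^ 2) := by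
      rw [intervalIntegral.integral_add intervalIntegrable_const hInt2,
        intervalIntegral.integral_const, smul_eq_mul]
      ring
    calc (∫ t in (-T)..T, Real.exp (2 * σ * (φ x t - φ x a)))
        ≤ ∫ t in (-T)..T, (Real.exp (-σ) + Real.exp (-(σ * lam / 4) * (t - a) ^ 2)) := hmono
      _ = 2 * T * Real.exp (-σ) + ∫ t in (-T)..T, Real.exp (-(σ * lam / 4) * (t - a) ^ 2) :=
          hsplit
      _ ≤ 2 * T * Real.exp (-σ) + Real.sqrt (Real.pi / (σ * lam / 4)) := by linarith
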